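/- Let H be a block matrix and L an invertible q×q matrix. Then the non-Hermitian latent symmetry L (H^n)_SS L⁻¹ = ((H^n)_SS)† for all n ∈ ℕ holds if and only if the isospectral reduction satisfies L R_S(H,ω) L⁻¹ = R_S(H,ω*)† for all ω outside the spectrum of H_S̄S̄ with |ω| larger than the operator norm of H_S̄S̄. -/

import Mathlib

open Matrix

namespace LatentAux

variable {p q : ℕ}

/-- The "letter" sequence: `T 0 = D`, `T (m+1) = C * A^m * B`. -/
noncomputable def Tseq (A : Matrix (Fin p) (Fin p) ℂ) (B : Matrix (Fin p) (Fin q) ℂ)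
    (C : Matrix (Fin q) (Fin p) ℂ) (D : Matrix (Fin q) (Fin q) ℂ) :
    ℕ → Matrix (Fin q) (Fin q) ℂ
  | 0 => D
  | (m+1) => C * A ^ m * B

/-- `Qb n` is the lower right block of `H ^ n`. -/
noncomputable def Qb (A : Matrix (Fin p) (Fin p) ℂ) (B : Matrix (Fin p) (Fin q) ℂ)
    (C : Matrix (Fin q) (Fin p) ℂ) (D : Matrix (Fin q) (Fin q) ℂ) (n : ℕ) :
    Matrix (Fin q) (Fin q) ℂ :=
  ((fromBlocks A B C D) ^ n).toBlocks₂₂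

lemma toBlocks₂₂_mul (M N : Matrix (Fin p ⊕ Fin q) (Fin p ⊕ Fin q) ℂ) :
    (M * N).toBlocks₂₂ = M.toBlocks₂₁ * N.toBlocks₁₂ + M.toBlocks₂₂ * N.toBlocks₂₂ := by
  conv_lhs => rw [← fromBlocks_toBlocks M, ← fromBlocks_toBlocks N, fromBlocks_multiply]
  rw [toBlocks_fromBlocks₂₂]

lemma toBlocks₁₂_mul (M N : Matrix (Fin p ⊕ Fin q) (Fin p ⊕ Fin q) ℂ) :
    (M * N).toBlocks₁₂ = M.toBlocks₁₁ * N.toBlocks₁₂ + M.toBlocks₁₂ * N.toBlocks₂₂ := by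
  conv_lhs => rw [← fromBlocks_toBlocks M, ← fromBlocks_toBlocks N, fromBlocks_multiply]
  rw [toBlocks_fromBlocks₁₂]

lemma toBlocks₂₁_mul (M N : Matrix (Fin p ⊕ Fin q) (Fin p ⊕ Fin q) ℂ) :
    (M * N).toBlocks₂₁ = M.toBlocks₂₁ * N.toBlocks₁₁ + M.toBlocks₂₂ * N.toBlocks₂₁ := by
  conv_lhs => rw [← fromBlocks_toBlocks M, ← fromBlocks_toBlocks N, fromBlocks_multiply]
  rw [toBlocks_fromBlocks₂₁]

section Blocks

variable (A : Matrix (Fin p) (Fin p) ℂ) (B : Matrix (Fin p) (Fin q) ℂ)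
    (C : Matrix (Fin q) (Fin p) ℂ) (D : Matrix (Fin q) (Fin q) ℂ)

lemma Q_zero : Qb A B C D 0 = 1 := by
  rw [Qb, pow_zero, ← fromBlocks_one, toBlocks_fromBlocks₂₂]

lemma P_closed : ∀ n : ℕ, ((fromBlocks A B C D) ^ n).toBlocks₁₂
    = ∑ j ∈ Finset.range n, A ^ (n - 1 - j) * B * Qb A B C D j := by
  intro n
  induction n with
  | zero => simp [pow_zero, ← fromBlocks_one, toBlocks_fromBlocks₁₂]
  | succ n ih =>
    rw [pow_succ' (fromBlocks A B C D) n, toBlocks₁₂_mul, ih, toBlocks_fromBlocks₁₁,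
      toBlocks_fromBlocks₁₂, Matrix.mul_sum, Finset.sum_range_succ]
    congr 1
    · apply Finset.sum_congr rfl
      intro j hj
      rw [Finset.mem_range] at hj
      have hj' : n - 1 - j + 1 = n + 1 - 1 - j := by omega
      rw [← Matrix.mul_assoc, ← Matrix.mul_assoc, ← pow_succ', hj']
    · have h2 : n + 1 - 1 - n = 0 := by omega
      rw [h2, pow_zero, Matrix.one_mul, Qb]

lemma s_closed : ∀ n : ℕ, ((fromBlocks A B C D) ^ n).toBlocks₂₁
    = ∑ j ∈ Finset.range n, Qb A B C D j * C * A ^ (n - 1 - j) := by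
  intro n
  induction n with
  | zero => simp [pow_zero, ← fromBlocks_one, toBlocks_fromBlocks₂₁]
  | succ n ih =>
    rw [pow_succ (fromBlocks A B C D) n, toBlocks₂₁_mul, ih, toBlocks_fromBlocks₁₁,
      toBlocks_fromBlocks₂₁, Matrix.sum_mul, Finset.sum_range_succ]
    congr 1
    · apply Finset.sum_congr rfl
      intro j hj
      rw [Finset.mem_range] at hj
      have hj' : n - 1 - j + 1 = n + 1 - 1 - j := by omega
      rw [Matrix.mul_assoc (Qb A B C D j * C), ← pow_succ, hj']
    · have h2 : n + 1 - 1 - n = 0 := by omega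
      rw [h2, pow_zero, Matrix.mul_one, Qb]

lemma Q_left (n : ℕ) : Qb A B C D (n+1)
    = ∑ j ∈ Finset.range (n+1), Tseq A B C D (n - j) * Qb A B C D j := by
  rw [Qb, pow_succ' (fromBlocks A B C D) n, toBlocks₂₂_mul, toBlocks_fromBlocks₂₁,
    toBlocks_fromBlocks₂₂, P_closed, Matrix.mul_sum, Finset.sum_range_succ]
  congr 1
  · apply Finset.sum_congr rfl
    intro j hj
    rw [Finset.mem_range] at hj
    have h1 : n - j = (n - 1 - j) + 1 := by omega
    rw [h1, Tseq, ← Matrix.mul_assoc, ← Matrix.mul_assoc]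
  · have h2 : n - n = 0 := by omega
    rw [h2, Tseq, Qb]

lemma Q_right (n : ℕ) : Qb A B C D (n+1)
    = ∑ j ∈ Finset.range (n+1), Qb A B C D j * Tseq A B C D (n - j) := by
  rw [Qb, pow_succ (fromBlocks A B C D) n, toBlocks₂₂_mul, toBlocks_fromBlocks₁₂,
    toBlocks_fromBlocks₂₂, s_closed, Matrix.sum_mul, Finset.sum_range_succ]
  congr 1
  · apply Finset.sum_congr rfl
    intro j hj
    rw [Finset.mem_range] at hj
    have h1 : n - j = (n - 1 - j) + 1 := by omega
    rw [h1, Tseq, Matrix.mul_assoc, Matrix.mul_assoc, Matrix.mul_assoc]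
  · have h2 : n - n = 0 := by omega
    rw [h2, Tseq, Qb]

end Blocks

variable {p q : ℕ}
variable (A : Matrix (Fin p) (Fin p) ℂ) (B : Matrix (Fin p) (Fin q) ℂ)
    (C : Matrix (Fin q) (Fin p) ℂ) (D : Matrix (Fin q) (Fin q) ℂ)
    (L : Matrix (Fin q) (Fin q) ℂ)

lemma conj_mul_conj (hinv : L⁻¹ * L = 1) (X Y : Matrix (Fin q) (Fin q) ℂ) :
    (L * X * L⁻¹) * (L * Y * L⁻¹) = L * (X * Y) * L⁻¹ := by
  have h : L * X * L⁻¹ * (L * Y * L⁻¹) = L * X * ((L⁻¹ * L) * (Y * L⁻¹)) := by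
    simp only [Matrix.mul_assoc]
  rw [h, hinv, Matrix.one_mul, ← Matrix.mul_assoc, ← Matrix.mul_assoc]

theorem latent_iff_T (hL : IsUnit L) :
    (∀ n : ℕ, L * Qb A B C D n * L⁻¹ = (Qb A B C D n)ᴴ)
      ↔ (∀ m : ℕ, L * Tseq A B C D m * L⁻¹ = (Tseq A B C D m)ᴴ) := by
  have hinv : L⁻¹ * L = 1 := Matrix.nonsing_inv_mul L ((Matrix.isUnit_iff_isUnit_det L).mp hL)
  have hinv' : L * L⁻¹ = 1 := Matrix.mul_nonsing_inv L ((Matrix.isUnit_iff_isUnit_det L).mp hL)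
  constructor
  · intro hQ
    intro m
    induction m using Nat.strong_induction_on with
    | _ m ih =>
      match m with
      | 0 =>
        have h1 := hQ 1
        rw [Qb, pow_one, toBlocks_fromBlocks₂₂] at h1
        exact h1
      | (n+1) =>
        -- T (n+1) = Q (n+2) - ∑ i in range (n+1), T (n-i) * Q (i+1)
        have hsplit : Qb A B C D (n+2)
            = (∑ i ∈ Finset.range (n+1), Tseq A B C D (n - i) * Qb A B C D (i+1))
              + Tseq A B C D (n+1) := by
          rw [Q_left A B C D (n+1), Finset.sum_range_succ']
          congr 1
          · apply Finset.sum_congr rfl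
            intro i hi
            have : n + 1 - (i + 1) = n - i := by omega
            rw [this]
          · rw [Nat.sub_zero, Q_zero, Matrix.mul_one]
        have hsplit' : (Qb A B C D (n+2))ᴴ
            = (∑ i ∈ Finset.range (n+1), (Tseq A B C D (n - i))ᴴ * (Qb A B C D (i+1))ᴴ)
              + (Tseq A B C D (n+1))ᴴ := by
          rw [Q_right A B C D (n+1), Finset.sum_range_succ']
          rw [conjTranspose_add, conjTranspose_sum]
          congr 1
          · apply Finset.sum_congr rfl
            intro i hi
            have : n + 1 - (i + 1) = n - i := by omega
            rw [this, conjTranspose_mul]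
          · rw [Nat.sub_zero, Q_zero, Matrix.one_mul]
        have hT : Tseq A B C D (n+1)
            = Qb A B C D (n+2) - ∑ i ∈ Finset.range (n+1), Tseq A B C D (n - i) * Qb A B C D (i+1) := by
          rw [hsplit]; abel
        have hTstar : (Tseq A B C D (n+1))ᴴ
            = (Qb A B C D (n+2))ᴴ
              - ∑ i ∈ Finset.range (n+1), (Tseq A B C D (n-i))ᴴ * (Qb A B C D (i+1))ᴴ := by
          rw [hsplit']; abel
        rw [hTstar, hT, Matrix.mul_sub, Matrix.sub_mul, hQ (n+2)]
        congr 1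
        rw [Matrix.mul_sum, Matrix.sum_mul]
        apply Finset.sum_congr rfl
        intro i hi
        rw [← conj_mul_conj L hinv, ih (n - i) (by omega), hQ (i+1)]
  · intro hT n
    induction n using Nat.strong_induction_on with
    | _ n ih =>
      match n with
      | 0 => rw [Q_zero, Matrix.mul_one, hinv', conjTranspose_one]
      | (n+1) =>
        conv_lhs => rw [Q_left A B C D n]
        conv_rhs => rw [Q_right A B C D n]
        rw [Matrix.mul_sum, Matrix.sum_mul, conjTranspose_sum]
        apply Finset.sum_congr rfl
        intro j hj
        rw [Finset.mem_range] at hj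
        rw [← conj_mul_conj L hinv, hT (n - j), ih j hj, conjTranspose_mul]


section Analytic

open scoped Matrix.Norms.L2Operator

lemma norm_one_le' (n : ℕ) : ‖(1 : Matrix (Fin n) (Fin n) ℂ)‖ ≤ 1 := by
  rw [Matrix.cstar_norm_def, _root_.map_one]
  exact ContinuousLinearMap.norm_id_le

lemma my_norm_pow_le (A : Matrix (Fin p) (Fin p) ℂ) : ∀ k : ℕ, ‖A ^ k‖ ≤ ‖A‖ ^ k
  | 0 => by rw [pow_zero, pow_zero]; exact norm_one_le' p
  | (k+1) => by
      rw [pow_succ, pow_succ]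
      exact le_trans (norm_mul_le _ _)
        (mul_le_mul_of_nonneg_right (my_norm_pow_le A k) (norm_nonneg A))

variable {A : Matrix (Fin p) (Fin p) ℂ} {ω : ℂ}

lemma nz (h : ‖A‖ < ‖ω‖) : ω ≠ 0 := by
  rintro rfl
  simp only [norm_zero] at h
  exact absurd h (norm_nonneg A).not_gt

lemma x_norm (h : ‖A‖ < ‖ω‖) : ‖ω⁻¹ • A‖ < 1 := by
  have hω : 0 < ‖ω‖ := lt_of_le_of_lt (norm_nonneg A) h
  rw [norm_smul, norm_inv, ← div_eq_inv_mul]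
  exact (div_lt_one hω).mpr h

lemma geom_term (k : ℕ) : ω⁻¹ • (ω⁻¹ • A) ^ k = ω⁻¹ ^ (k+1) • A ^ k := by
  rw [smul_pow, smul_smul, ← pow_succ']

lemma summable_geom (h : ‖A‖ < ‖ω‖) :
    Summable (fun k : ℕ => ω⁻¹ ^ (k+1) • A ^ k) := by
  have hs := (summable_geometric_of_norm_lt_one (x_norm h)).const_smul ω⁻¹
  exact hs.congr (fun k => geom_term k)

lemma resolvent_eq (h : ‖A‖ < ‖ω‖) :
    (A - ω • 1)⁻¹ = -∑' k : ℕ, ω⁻¹ ^ (k+1) • A ^ k := by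
  have hω : ω ≠ 0 := nz h
  have hx := x_norm h
  have hmul : (1 - ω⁻¹ • A) * (∑' k:ℕ, (ω⁻¹ • A) ^ k) = 1 := mul_neg_geom_series _ hx
  have hfac : A - ω • 1 = (-ω) • (1 - ω⁻¹ • A) := by
    rw [smul_sub, smul_smul, neg_mul, mul_inv_cancel₀ hω, neg_smul ω, neg_smul (1:ℂ), one_smul,
      sub_neg_eq_add, neg_add_eq_sub]
  have key : (A - ω • 1) * (-(ω⁻¹ • ∑' k:ℕ, (ω⁻¹ • A) ^ k)) = 1 := by
    rw [hfac, neg_smul, neg_mul, mul_neg, neg_neg, smul_mul_assoc, mul_smul_comm, smul_smul,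
      mul_inv_cancel₀ hω, one_smul, hmul]
  rw [Matrix.inv_eq_right_inv key]
  congr 1
  rw [← Summable.tsum_const_smul ω⁻¹ (summable_geometric_of_norm_lt_one hx)]
  exact tsum_congr (fun k => geom_term k)

/-- `X ↦ C * X * B` as a continuous linear map. -/
noncomputable def sandwich {m n r s : ℕ} (C : Matrix (Fin r) (Fin m) ℂ)
    (B : Matrix (Fin n) (Fin s) ℂ) :
    Matrix (Fin m) (Fin n) ℂ →L[ℂ] Matrix (Fin r) (Fin s) ℂ :=
  LinearMap.toContinuousLinearMap
    { toFun := fun X => C * X * B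
      map_add' := fun X Y => by simp only [Matrix.mul_add, Matrix.add_mul]
      map_smul' := fun c X => by
        simp only [RingHom.id_apply, Matrix.mul_smul, Matrix.smul_mul] }

@[simp] lemma sandwich_apply {m n r s : ℕ} (C : Matrix (Fin r) (Fin m) ℂ)
    (B : Matrix (Fin n) (Fin s) ℂ) (X : Matrix (Fin m) (Fin n) ℂ) :
    sandwich C B X = C * X * B := rfl

/-- conjugate transpose as a continuous real-linear map. -/
noncomputable def ctCLM (m n : ℕ) :
    Matrix (Fin m) (Fin n) ℂ →L[ℝ] Matrix (Fin n) (Fin m) ℂ :=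
  LinearMap.toContinuousLinearMap
    { toFun := fun X => Xᴴ
      map_add' := fun X Y => Matrix.conjTranspose_add X Y
      map_smul' := fun r X => by
        show (r • X)ᴴ = r • Xᴴ
        rw [Matrix.conjTranspose_smul, star_trivial] }

@[simp] lemma ctCLM_apply {m n : ℕ} (X : Matrix (Fin m) (Fin n) ℂ) : ctCLM m n X = Xᴴ := rfl

variable (B : Matrix (Fin p) (Fin q) ℂ) (C : Matrix (Fin q) (Fin p) ℂ)
  (D : Matrix (Fin q) (Fin q) ℂ) (L : Matrix (Fin q) (Fin q) ℂ)

lemma summable_CB (h : ‖A‖ < ‖ω‖) :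
    Summable (fun k : ℕ => ω⁻¹ ^ (k+1) • (C * A ^ k * B)) := by
  have hs := (sandwich C B).summable (summable_geom h)
  exact hs.congr (fun k => by
    simp only [sandwich_apply, _root_.map_smul, Matrix.mul_smul, Matrix.smul_mul])

lemma red_expand (h : ‖A‖ < ‖ω‖) :
    D - C * (A - ω • 1)⁻¹ * B = D + ∑' k : ℕ, ω⁻¹ ^ (k+1) • (C * A ^ k * B) := by
  have hmap : C * (∑' k : ℕ, ω⁻¹ ^ (k+1) • A ^ k) * B
      = ∑' k : ℕ, ω⁻¹ ^ (k+1) • (C * A ^ k * B) := by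
    have h1 := (sandwich C B).map_tsum (summable_geom h)
    simpa only [sandwich_apply, _root_.map_smul, Matrix.mul_smul, Matrix.smul_mul] using h1
  rw [resolvent_eq h, Matrix.mul_neg, Matrix.neg_mul, hmap, sub_neg_eq_add]

lemma red_expand_star (h : ‖A‖ < ‖ω‖) :
    (D - C * (A - (starRingEnd ℂ ω) • 1)⁻¹ * B)ᴴ
      = Dᴴ + ∑' k : ℕ, ω⁻¹ ^ (k+1) • (C * A ^ k * B)ᴴ := by
  have habs : ‖A‖ < ‖starRingEnd ℂ ω‖ := by rwa [Complex.norm_conj]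
  rw [red_expand B C D habs, conjTranspose_add]
  congr 1
  calc (∑' k : ℕ, (starRingEnd ℂ ω)⁻¹ ^ (k+1) • (C * A ^ k * B))ᴴ
      = ∑' k : ℕ, ((starRingEnd ℂ ω)⁻¹ ^ (k+1) • (C * A ^ k * B))ᴴ := by
        have h1 := (ctCLM q q).map_tsum (summable_CB B C habs)
        simpa only [ctCLM_apply] using h1
    _ = ∑' k : ℕ, ω⁻¹ ^ (k+1) • (C * A ^ k * B)ᴴ := by
        refine tsum_congr (fun k => ?_)
        rw [Matrix.conjTranspose_smul, star_pow, star_inv₀, Complex.star_def, Complex.conj_conj]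

lemma red_expand_L (h : ‖A‖ < ‖ω‖) :
    L * (D - C * (A - ω • 1)⁻¹ * B) * L⁻¹
      = L * D * L⁻¹ + ∑' k : ℕ, ω⁻¹ ^ (k+1) • (L * (C * A ^ k * B) * L⁻¹) := by
  rw [red_expand B C D h, Matrix.mul_add, Matrix.add_mul]
  congr 1
  have h1 := (sandwich L L⁻¹).map_tsum (summable_CB B C h)
  simpa only [sandwich_apply, _root_.map_smul, Matrix.mul_smul, Matrix.smul_mul] using h1

section Extraction

variable {M : Type*} [NormedAddCommGroup M] [NormedSpace ℂ M] [CompleteSpace M]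

lemma term_bound (E : ℕ → M) (c ρ : ℝ) (hρ : 0 ≤ ρ)
    (hE : ∀ k, ‖E k‖ ≤ c * ρ ^ k) {t : ℝ} (ht : max (2 * ρ) 1 ≤ t) (k : ℕ) :
    ‖((t:ℂ)⁻¹) ^ (k+1) • E k‖ ≤ (c / t) * (1/2) ^ k := by
  have ht1 : (1:ℝ) ≤ t := le_trans (le_max_right _ _) ht
  have ht0 : (0:ℝ) < t := lt_of_lt_of_le one_pos ht1
  have ht2 : 2 * ρ ≤ t := le_trans (le_max_left _ _) ht
  have habs : ‖((t:ℂ)⁻¹) ^ (k+1)‖ = t⁻¹ ^ (k+1) := by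
    rw [norm_pow, norm_inv, Complex.norm_real, Real.norm_eq_abs, abs_of_pos ht0]
  rw [norm_smul, habs]
  calc t⁻¹ ^ (k+1) * ‖E k‖ ≤ t⁻¹ ^ (k+1) * (c * ρ ^ k) :=
        mul_le_mul_of_nonneg_left (hE k) (by positivity)
    _ = (c / t) * (ρ / t) ^ k := by
        rw [div_pow, div_eq_mul_inv c, div_eq_mul_inv (ρ ^ k), ← inv_pow, pow_succ]
        ring
    _ ≤ (c / t) * (1/2) ^ k := by
        have hc0 : 0 ≤ c := le_trans (norm_nonneg (E 0)) (by simpa using hE 0)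
        apply mul_le_mul_of_nonneg_left _ (by positivity)
        apply pow_le_pow_left₀ (by positivity)
        rw [div_le_div_iff₀ ht0 (by norm_num : (0:ℝ) < 2)]
        linarith

lemma summable_term (E : ℕ → M) (c ρ : ℝ) (hρ : 0 ≤ ρ)
    (hE : ∀ k, ‖E k‖ ≤ c * ρ ^ k) {t : ℝ} (ht : max (2 * ρ) 1 ≤ t) :
    Summable (fun k : ℕ => ((t:ℂ)⁻¹) ^ (k+1) • E k) :=
  Summable.of_norm_bounded
    ((summable_geometric_of_lt_one (by norm_num) (by norm_num)).mul_left (c / t))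
    (term_bound E c ρ hρ hE ht)

lemma sum_bound (E : ℕ → M) (c ρ : ℝ) (hρ : 0 ≤ ρ)
    (hE : ∀ k, ‖E k‖ ≤ c * ρ ^ k) {t : ℝ} (ht : max (2 * ρ) 1 ≤ t) :
    ‖∑' k : ℕ, ((t:ℂ)⁻¹) ^ (k+1) • E k‖ ≤ 2 * c / t := by
  have hgeo : HasSum (fun k : ℕ => (c/t) * (1/2:ℝ) ^ k) (2 * c / t) := by
    have h1 := (hasSum_geometric_of_lt_one (by norm_num : (0:ℝ) ≤ 1/2)
      (by norm_num : (1/2:ℝ) < 1)).mul_left (c/t)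
    have h2 : (c/t) * (1 - 1/2 : ℝ)⁻¹ = 2 * c / t := by norm_num; ring
    rwa [h2] at h1
  exact tsum_of_norm_bounded hgeo (term_bound E c ρ hρ hE ht)

lemma eq_zero_of_bound (X : M) (c t₀ : ℝ)
    (h : ∀ t : ℝ, max t₀ 1 ≤ t → ‖X‖ ≤ c / t) : X = 0 := by
  rw [← norm_le_zero_iff]
  refine le_of_forall_pos_le_add (fun ε hε => ?_)
  set t := max (max t₀ 1) (c / ε) with htdef
  have ht1 : (1:ℝ) ≤ t := le_trans (le_max_right t₀ 1) (le_max_left _ _)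
  have ht0 : (0:ℝ) < t := lt_of_lt_of_le one_pos ht1
  have hXt := h t (le_max_left _ _)
  have hct : c / t ≤ ε := by
    rw [div_le_iff₀ ht0]
    rcases le_or_gt c 0 with hc | hc
    · nlinarith
    · have htc : c / ε ≤ t := le_max_right _ _
      have : c = ε * (c / ε) := by field_simp
      nlinarith
  linarith

lemma extraction (F : M) (E : ℕ → M) (c ρ : ℝ) (hc : 0 ≤ c) (hρ : 0 ≤ ρ)
    (hE : ∀ k, ‖E k‖ ≤ c * ρ ^ k)
    (hid : ∀ t : ℝ, max (2*ρ) 1 ≤ t → F + ∑' k : ℕ, ((t:ℂ)⁻¹) ^ (k+1) • E k = 0) :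
    F = 0 ∧ ∀ k, E k = 0 := by
  have hF : F = 0 := by
    apply eq_zero_of_bound F (2*c) (2*ρ)
    intro t ht
    have h0 := hid t ht
    rw [eq_neg_of_add_eq_zero_left h0, norm_neg]
    exact sum_bound E c ρ hρ hE ht
  refine ⟨hF, ?_⟩
  intro k
  induction k using Nat.strong_induction_on with
  | _ k ih =>
    apply eq_zero_of_bound (E k) (2*(c*ρ^(k+1))) (2*ρ)
    intro t ht
    have ht1 : (1:ℝ) ≤ t := le_trans (le_max_right _ _) ht
    have ht0 : (0:ℝ) < t := lt_of_lt_of_le one_pos ht1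
    have htC : ((t:ℂ))⁻¹ ≠ 0 := inv_ne_zero (by exact_mod_cast ht0.ne')
    have hs := summable_term E c ρ hρ hE ht
    have h0 := hid t ht
    rw [hF, zero_add] at h0
    have hshift : ∀ m : ℕ, ‖E (m + (k+1))‖ ≤ (c * ρ^(k+1)) * ρ ^ m := by
      intro m
      calc ‖E (m + (k+1))‖ ≤ c * ρ ^ (m + (k+1)) := hE _
        _ = (c * ρ^(k+1)) * ρ ^ m := by ring
    have hs' : Summable (fun m : ℕ => ((t:ℂ)⁻¹) ^ (m + k + 1) • E (m + k)) :=
      (summable_nat_add_iff k).mpr hs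
    have h1 : ∑' m : ℕ, ((t:ℂ)⁻¹) ^ (m + k + 1) • E (m + k) = 0 := by
      have h2 := Summable.sum_add_tsum_nat_add (f := fun j => ((t:ℂ)⁻¹) ^ (j+1) • E j) k hs
      rw [h0] at h2
      have hsum0 : ∑ j ∈ Finset.range k, ((t:ℂ)⁻¹) ^ (j+1) • E j = 0 :=
        Finset.sum_eq_zero (fun j hj => by
          rw [ih j (Finset.mem_range.mp hj), smul_zero])
      rw [hsum0, zero_add] at h2
      exact h2
    rw [Summable.tsum_eq_zero_add hs'] at h1
    simp only [zero_add] at h1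
    have hsin : Summable (fun m : ℕ => ((t:ℂ)⁻¹) ^ (m+1) • E (m + (k+1))) :=
      summable_term (fun m => E (m + (k+1))) (c * ρ^(k+1)) ρ hρ hshift ht
    have htail : ∑' m : ℕ, ((t:ℂ)⁻¹) ^ (m + 1 + k + 1) • E (m + 1 + k)
        = ((t:ℂ)⁻¹) ^ (k+1) • ∑' m : ℕ, ((t:ℂ)⁻¹) ^ (m+1) • E (m + (k+1)) := by
      rw [← Summable.tsum_const_smul _ hsin]
      refine tsum_congr (fun m => ?_)
      rw [smul_smul, ← pow_add]
      have e1 : k + 1 + (m + 1) = m + 1 + k + 1 := by ring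
      have e2 : m + (k + 1) = m + 1 + k := by ring
      rw [e1, e2]
    rw [htail, ← smul_add] at h1
    have h5 := (smul_eq_zero.mp h1).resolve_left (pow_ne_zero _ htC)
    rw [eq_neg_of_add_eq_zero_left h5, norm_neg]
    exact sum_bound (fun m => E (m + (k+1))) (c * ρ^(k+1)) ρ hρ hshift ht

end Extraction

end Analytic

end LatentAux

open scoped Matrix.Norms.L2Operator in
/-- Theorem 2 (alternative expression of non-Hermitian latent symmetry):
the latent symmetry `L (H^n)_SS L⁻¹ = ((H^n)_SS)†` for all n holds iff the
isospectral reduction satisfies `L R_S(H,ω) L⁻¹ = R_S(H,ω*)†` for all ω outside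
the spectrum of H_S̄S̄ with |ω| larger than the (ℓ²) operator norm of H_S̄S̄. -/
theorem latent_symmetry_iff_isospectral_symmetry (p q : ℕ)
    (A : Matrix (Fin p) (Fin p) ℂ) (B : Matrix (Fin p) (Fin q) ℂ)
    (C : Matrix (Fin q) (Fin p) ℂ) (D : Matrix (Fin q) (Fin q) ℂ)
    (L : Matrix (Fin q) (Fin q) ℂ) (hL : IsUnit L) :
    (∀ n : ℕ, L * ((Matrix.fromBlocks A B C D) ^ n).toBlocks₂₂ * L⁻¹
        = (((Matrix.fromBlocks A B C D) ^ n).toBlocks₂₂)ᴴ)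
      ↔ (∀ ω : ℂ, ω ∉ spectrum ℂ A →
          ‖Matrix.toEuclideanCLM (𝕜 := ℂ) A‖ < ‖ω‖ →
          L * (D - C * (A - ω • 1)⁻¹ * B) * L⁻¹
            = (D - C * (A - (starRingEnd ℂ ω) • 1)⁻¹ * B)ᴴ) := by
  constructor
  · intro h1 ω hω hnorm
    have hnorm' : ‖A‖ < ‖ω‖ := by rw [Matrix.cstar_norm_def]; exact hnorm
    have hT := (LatentAux.latent_iff_T A B C D L hL).mp (fun n => h1 n)
    rw [LatentAux.red_expand_L B C D L hnorm', LatentAux.red_expand_star B C D hnorm']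
    congr 1
    · exact hT 0
    · exact tsum_congr (fun k => by
        rw [show L * (C * A ^ k * B) * L⁻¹ = (C * A ^ k * B)ᴴ from hT (k+1)])
  · intro h2
    have hΘmem : ∃ Θ : Matrix (Fin p) (Fin p) ℂ →L[ℝ] Matrix (Fin q) (Fin q) ℂ,
        ∀ X : Matrix (Fin p) (Fin p) ℂ, Θ X = L * (C * X * B) * L⁻¹ - Bᴴ * Xᴴ * Cᴴ := by
      refine ⟨LinearMap.toContinuousLinearMap
        { toFun := fun X => L * (C * X * B) * L⁻¹ - Bᴴ * Xᴴ * Cᴴ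
          map_add' := fun X Y => by
            simp only [Matrix.conjTranspose_add, Matrix.mul_add, Matrix.add_mul]
            abel
          map_smul' := fun r X => by
            show L * (C * (r • X) * B) * L⁻¹ - Bᴴ * (r • X)ᴴ * Cᴴ = _
            rw [Matrix.conjTranspose_smul, star_trivial]
            simp only [Matrix.mul_smul, Matrix.smul_mul, smul_sub, RingHom.id_apply] },
        fun X => rfl⟩
    obtain ⟨Θ, hΘ⟩ := hΘmem
    have hEk : ∀ k : ℕ, L * (C * A ^ k * B) * L⁻¹ - (C * A ^ k * B)ᴴ = Θ (A ^ k) := by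
      intro k
      rw [hΘ]
      simp only [Matrix.conjTranspose_mul, Matrix.mul_assoc]
    have hbound : ∀ k, ‖L * (C * A ^ k * B) * L⁻¹ - (C * A ^ k * B)ᴴ‖ ≤ ‖Θ‖ * ‖A‖ ^ k := by
      intro k
      rw [hEk k]
      exact le_trans (Θ.le_opNorm _)
        (mul_le_mul_of_nonneg_left (LatentAux.my_norm_pow_le A k) (ContinuousLinearMap.opNorm_nonneg Θ))
    have key := LatentAux.extraction (L * D * L⁻¹ - Dᴴ)
      (fun k => L * (C * A ^ k * B) * L⁻¹ - (C * A ^ k * B)ᴴ)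
      ‖Θ‖ ‖A‖ (ContinuousLinearMap.opNorm_nonneg Θ) (norm_nonneg _) hbound ?_
    · have hT : ∀ m : ℕ, L * LatentAux.Tseq A B C D m * L⁻¹ = (LatentAux.Tseq A B C D m)ᴴ := by
        intro m
        match m with
        | 0 => exact sub_eq_zero.mp key.1
        | (k+1) => exact sub_eq_zero.mp (key.2 k)
      exact fun n => (LatentAux.latent_iff_T A B C D L hL).mpr hT n
    · intro t ht
      have ht1 : (1:ℝ) ≤ t := le_trans (le_max_right _ _) ht
      have ht0 : (0:ℝ) < t := lt_of_lt_of_le one_pos ht1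
      have ht2 : 2 * ‖A‖ ≤ t := le_trans (le_max_left _ _) ht
      have hρt : ‖A‖ < t := by nlinarith [norm_nonneg A]
      have hnorm : ‖A‖ < ‖(t:ℂ)‖ := by
        rwa [Complex.norm_real, Real.norm_eq_abs, abs_of_pos ht0]
      have hspec : ((t:ℂ)) ∉ spectrum ℂ A := by
        intro hmem
        have hmem2 := spectrum.subset_closedBall_norm_mul A hmem
        rw [Metric.mem_closedBall, dist_zero_right] at hmem2
        have h1n : ‖(1 : Matrix (Fin p) (Fin p) ℂ)‖ ≤ 1 := LatentAux.norm_one_le' p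
        have habs : ‖((t:ℂ))‖ = t := by
          rw [Complex.norm_real, Real.norm_eq_abs, abs_of_pos ht0]
        rw [habs] at hmem2
        nlinarith [norm_nonneg A]
      have heq := h2 (t:ℂ) hspec (by rw [← Matrix.cstar_norm_def]; exact hnorm)
      rw [LatentAux.red_expand_L B C D L hnorm, LatentAux.red_expand_star B C D hnorm] at heq
      have hsX : Summable (fun k : ℕ => ((t:ℂ))⁻¹ ^ (k+1) • (L * (C * A ^ k * B) * L⁻¹)) := by
        have hs := (LatentAux.sandwich L L⁻¹).summable (LatentAux.summable_CB B C hnorm)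
        exact hs.congr (fun k => by
          simp only [LatentAux.sandwich_apply, _root_.map_smul, Matrix.mul_smul, Matrix.smul_mul])
      have hsY : Summable (fun k : ℕ => ((t:ℂ))⁻¹ ^ (k+1) • (C * A ^ k * B)ᴴ) := by
        have hs := (LatentAux.ctCLM q q).summable (LatentAux.summable_CB B C hnorm)
        refine hs.congr (fun k => ?_)
        show (((t:ℂ))⁻¹ ^ (k+1) • (C * A ^ k * B))ᴴ = _
        rw [Matrix.conjTranspose_smul, star_pow, star_inv₀, Complex.star_def,
          Complex.conj_ofReal]
      have hsub : ∑' k : ℕ, ((t:ℂ))⁻¹ ^ (k+1) • (L * (C * A ^ k * B) * L⁻¹ - (C * A ^ k * B)ᴴ)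
          = (∑' k : ℕ, ((t:ℂ))⁻¹ ^ (k+1) • (L * (C * A ^ k * B) * L⁻¹))
            - ∑' k : ℕ, ((t:ℂ))⁻¹ ^ (k+1) • (C * A ^ k * B)ᴴ := by
        rw [← Summable.tsum_sub hsX hsY]
        exact tsum_congr (fun k => smul_sub _ _ _)
      rw [hsub, sub_add_sub_comm, sub_eq_zero]
      exact heq
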